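/- Let n ≥ 6 and let Γ_1,…,Γ_{n−2} be 3-element subsets of N = {1,…,n} such that every element of N has valence 2 or 3 and both conditions (‡) and (†) hold. Let Π be the dual graph of Γ (a simple graph, since under (†) two triples share at most one vertex). Let e be an edge of Π, let L be a black endpoint of e, and let Π̂ be obtained from Π by subdividing e with a new vertex Z (replacing e by a path of two edges through Z). For Y a subset of the vertices of Π̂, let b(Y) and w(Y) be the numbers of black resp. white vertices of Π lying in Y, let #(Y) be the number of edges of Π̂ with exactly one endpoint in Y, and set ε(Y) = 1 if L ∈ Y and Z ∉ Y, ε(Y) = −1 if Z ∈ Y and L ∉ Y, and ε(Y) = 0 otherwise. Then for every Y with ∅ ≠ Y ≠ V(Π̂): (n−2)·w(Y) − (n−6)·b(Y) + (2n−8)·ε(Y) ≤ (n−4)·#(Y). -/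

import Mathlib

open Finset
open scoped Classical

/-- The valence of `i ∈ N = {1,…,n}`: the number of hyperedges `Γ_j` containing `i`. -/
def valence (n : ℕ) (Γ : ℕ → Finset ℕ) (i : ℕ) : ℕ :=
  ((Finset.Icc 1 (n - 2)).filter fun j => i ∈ Γ j).card

/-- Adjacency in the dual graph `Π` of `Γ`: vertices are the triples (black,
`Sum.inl j` for `j ∈ {1,…,n-2}`) and the valence-3 elements of `N` (white,
`Sum.inr i`); a black vertex `Γ_j` is joined to a white vertex `i` whenever `i ∈ Γ_j`,
and two distinct black vertices are joined whenever they share a valence-2 element. -/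
def piAdj (n : ℕ) (Γ : ℕ → Finset ℕ) (x y : ℕ ⊕ ℕ) : Prop :=
  (∃ j i, ((x = Sum.inl j ∧ y = Sum.inr i) ∨ (x = Sum.inr i ∧ y = Sum.inl j)) ∧
      j ∈ Finset.Icc 1 (n - 2) ∧ valence n Γ i = 3 ∧ i ∈ Γ j) ∨
  (∃ j j', x = Sum.inl j ∧ y = Sum.inl j' ∧ j ≠ j' ∧
      j ∈ Finset.Icc 1 (n - 2) ∧ j' ∈ Finset.Icc 1 (n - 2) ∧
      ∃ i, valence n Γ i = 2 ∧ i ∈ Γ j ∧ i ∈ Γ j')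

/-- Adjacency in the graph `Π̂` obtained from `Π` by subdividing the edge `{L, v}`
with a new vertex `Z = Sum.inr ()`: the edge `{L, v}` is removed and `Z` is joined to
both `L` and `v`. -/
def hatAdj (n : ℕ) (Γ : ℕ → Finset ℕ) (L v : ℕ ⊕ ℕ)
    (x y : (ℕ ⊕ ℕ) ⊕ Unit) : Prop :=
  (∃ a b, x = Sum.inl a ∧ y = Sum.inl b ∧ piAdj n Γ a b ∧
      ¬((a = L ∧ b = v) ∨ (a = v ∧ b = L))) ∨
  (∃ a, ((x = Sum.inl a ∧ y = Sum.inr ()) ∨ (x = Sum.inr () ∧ y = Sum.inl a)) ∧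
      (a = L ∨ a = v))

/-- The vertex set of `Π̂`. -/
def hatVertexSet (n : ℕ) (Γ : ℕ → Finset ℕ) : Set ((ℕ ⊕ ℕ) ⊕ Unit) :=
  {x | (∃ j ∈ Finset.Icc 1 (n - 2), x = Sum.inl (Sum.inl j)) ∨
       (∃ i, valence n Γ i = 3 ∧ x = Sum.inl (Sum.inr i)) ∨ x = Sum.inr ()}

/-- `#(Y)`: the number of edges of `Π̂` with exactly one endpoint in `Y`, counted as
ordered pairs `(p₁, p₂)` of adjacent vertices with `p₁ ∈ Y` and `p₂ ∉ Y`. -/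
noncomputable def edgeBoundary (n : ℕ) (Γ : ℕ → Finset ℕ) (L v : ℕ ⊕ ℕ)
    (Y : Set ((ℕ ⊕ ℕ) ⊕ Unit)) : ℕ :=
  Set.ncard {p : ((ℕ ⊕ ℕ) ⊕ Unit) × ((ℕ ⊕ ℕ) ⊕ Unit) |
    hatAdj n Γ L v p.1 p.2 ∧ p.1 ∈ Y ∧ p.2 ∉ Y}

/-- `ε(Y)`: `1` if `L ∈ Y` and `Z ∉ Y`, `−1` if `Z ∈ Y` and `L ∉ Y`, `0` otherwise. -/
noncomputable def eps (L : ℕ ⊕ ℕ) (Y : Set ((ℕ ⊕ ℕ) ⊕ Unit)) : ℤ :=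
  if Sum.inl L ∈ Y ∧ (Sum.inr () : (ℕ ⊕ ℕ) ⊕ Unit) ∉ Y then 1
  else if (Sum.inr () : (ℕ ⊕ ℕ) ⊕ Unit) ∈ Y ∧ Sum.inl L ∉ Y then -1
  else 0

namespace Gieseker

def blv (j : ℕ) : (ℕ ⊕ ℕ) ⊕ Unit := Sum.inl (Sum.inl j)
def whv (i : ℕ) : (ℕ ⊕ ℕ) ⊕ Unit := Sum.inl (Sum.inr i)
def ZZ : (ℕ ⊕ ℕ) ⊕ Unit := Sum.inr ()

variable (n : ℕ) (Γ : ℕ → Finset ℕ)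

noncomputable def V3 : Finset ℕ := (Icc 1 n).filter fun i => valence n Γ i = 3
noncomputable def V2 : Finset ℕ := (Icc 1 n).filter fun i => valence n Γ i = 2

noncomputable def Uf : Finset ((ℕ ⊕ ℕ) ⊕ Unit) :=
  ((Icc 1 (n-2)).image blv) ∪ ((V3 n Γ).image whv) ∪ {ZZ}

lemma blv_mem_Uf {j : ℕ} (hj : j ∈ Icc 1 (n-2)) : blv j ∈ Uf n Γ := by
  simp only [Uf, mem_union, mem_image]
  exact Or.inl (Or.inl ⟨j, hj, rfl⟩)

lemma whv_mem_Uf {i : ℕ} (hi : i ∈ V3 n Γ) : whv i ∈ Uf n Γ := by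
  simp only [Uf, mem_union, mem_image]
  exact Or.inl (Or.inr ⟨i, hi, rfl⟩)

lemma ZZ_mem_Uf : ZZ ∈ Uf n Γ := by
  simp [Uf]


lemma mem_Icc_of_val_pos (hsub : ∀ j ∈ Icc 1 (n-2), Γ j ⊆ Icc 1 n)
    {i : ℕ} (h : 0 < valence n Γ i) : i ∈ Icc 1 n := by
  rw [valence, card_pos] at h
  obtain ⟨j, hj⟩ := h
  rw [mem_filter] at hj
  exact hsub j hj.1 hj.2

lemma pair_inter (hn : 6 ≤ n)
    (hcard : ∀ j ∈ Icc 1 (n-2), (Γ j).card = 3)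
    (hdag : ∀ S ⊆ Finset.Icc 1 (n - 2), 2 ≤ S.card → S.card ≤ n - 3 →
      S.card + 3 ≤ (S.biUnion Γ).card)
    {j j' i i' : ℕ}
    (hj : j ∈ Icc 1 (n-2)) (hj' : j' ∈ Icc 1 (n-2)) (hjj : j ≠ j')
    (h1 : i ∈ Γ j) (h2 : i ∈ Γ j') (h3 : i' ∈ Γ j) (h4 : i' ∈ Γ j') (hii : i ≠ i') :
    False := by
  have hS : ({j, j'} : Finset ℕ) ⊆ Icc 1 (n-2) := by
    intro x hx
    rcases mem_insert.mp hx with h | h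
    · exact h ▸ hj
    · exact (mem_singleton.mp h) ▸ hj'
  have hc : ({j, j'} : Finset ℕ).card = 2 := card_pair hjj
  have h5 := hdag {j, j'} hS (by omega) (by omega)
  have hb : ({j, j'} : Finset ℕ).biUnion Γ = Γ j ∪ Γ j' := by
    ext x; simp [mem_biUnion, mem_union]
  rw [hc, hb] at h5
  have hint : 2 ≤ (Γ j ∩ Γ j').card := by
    have hsub2 : ({i, i'} : Finset ℕ) ⊆ Γ j ∩ Γ j' := by
      intro x hx
      rcases mem_insert.mp hx with h | h
      · subst h; exact mem_inter.mpr ⟨h1, h2⟩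
      · rw [mem_singleton.mp h]; exact mem_inter.mpr ⟨h3, h4⟩
    calc 2 = ({i, i'} : Finset ℕ).card := (card_pair hii).symm
      _ ≤ _ := card_le_card hsub2
  have hu := card_union_add_card_inter (Γ j) (Γ j')
  rw [hcard j hj, hcard j' hj'] at hu
  omega

lemma sum_card_filter_comm {α β : Type*} (A : Finset α) (B : Finset β) (R : α → β → Prop) :
    ∑ i ∈ A, (B.filter fun j => R i j).card = ∑ j ∈ B, (A.filter fun i => R i j).card := by
  simp only [card_filter]
  exact Finset.sum_comm


lemma sum_card_filter_comm' {α β : Type*} (A : Finset α) (B : Finset β) (R : α → β → Prop) :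
    ∑ i ∈ A, (B.filter fun j => R i j).card = ∑ j ∈ B, (A.filter fun i => R i j).card := by
  simp only [card_filter]
  exact Finset.sum_comm

lemma sum_valence (hsub : ∀ j ∈ Icc 1 (n-2), Γ j ⊆ Icc 1 n)
    (hcard : ∀ j ∈ Icc 1 (n-2), (Γ j).card = 3) :
    ∑ i ∈ Icc 1 n, valence n Γ i = 3 * (n - 2) := by
  unfold valence
  rw [show ∑ i ∈ Icc 1 n, ((Icc 1 (n-2)).filter fun j => i ∈ Γ j).card
      = ∑ j ∈ Icc 1 (n-2), ((Icc 1 n).filter fun i => i ∈ Γ j).card by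
    simp only [card_filter]; exact Finset.sum_comm]
  have : ∀ j ∈ Icc 1 (n-2), ((Icc 1 n).filter fun i => i ∈ Γ j).card = 3 := by
    intro j hj
    have : (Icc 1 n).filter (fun i => i ∈ Γ j) = Γ j := by
      ext x
      simp only [mem_filter]
      exact ⟨fun h => h.2, fun h => ⟨hsub j hj h, h⟩⟩
    rw [this, hcard j hj]
  rw [Finset.sum_congr rfl this, Finset.sum_const, smul_eq_mul, Nat.card_Icc]
  omega

lemma V_partition (hval : ∀ i ∈ Icc 1 n, valence n Γ i = 2 ∨ valence n Γ i = 3) :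
    (V2 n Γ).card + (V3 n Γ).card = n := by
  rw [V2, V3]
  have := Finset.card_filter_add_card_filter_not (s := Icc 1 n)
    (p := fun i => valence n Γ i = 2)
  rw [Nat.card_Icc] at this
  have h2 : (Icc 1 n).filter (fun a => ¬ valence n Γ a = 2) =
      (Icc 1 n).filter (fun i => valence n Γ i = 3) := by
    apply filter_congr
    intro i hi
    rcases hval i hi with h | h <;> simp [h]
  rw [h2] at this
  omega

lemma card_V3 (hn : 6 ≤ n) (hsub : ∀ j ∈ Icc 1 (n-2), Γ j ⊆ Icc 1 n)
    (hcard : ∀ j ∈ Icc 1 (n-2), (Γ j).card = 3)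
    (hval : ∀ i ∈ Icc 1 n, valence n Γ i = 2 ∨ valence n Γ i = 3) :
    (V3 n Γ).card + 6 = n ∧ (V2 n Γ).card = 6 := by
  have hpart := V_partition n Γ hval
  have hsum := sum_valence n Γ hsub hcard
  have hsplit : ∑ i ∈ Icc 1 n, valence n Γ i =
      2 * (V2 n Γ).card + 3 * (V3 n Γ).card := by
    rw [V2, V3]
    rw [← Finset.sum_filter_add_sum_filter_not (Icc 1 n) (fun i => valence n Γ i = 2)]
    have e1 : ∑ i ∈ (Icc 1 n).filter (fun i => valence n Γ i = 2), valence n Γ i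
        = 2 * ((Icc 1 n).filter (fun i => valence n Γ i = 2)).card := by
      rw [Finset.sum_congr rfl (fun i hi => (mem_filter.mp hi).2), Finset.sum_const, smul_eq_mul]
      omega
    have h2 : (Icc 1 n).filter (fun i => ¬ valence n Γ i = 2) =
        (Icc 1 n).filter (fun i => valence n Γ i = 3) := by
      apply filter_congr
      intro i hi
      rcases hval i hi with h | h <;> simp [h]
    have e2 : ∑ i ∈ (Icc 1 n).filter (fun i => ¬ valence n Γ i = 2), valence n Γ i
        = 3 * ((Icc 1 n).filter (fun i => valence n Γ i = 3)).card := by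
      rw [h2, Finset.sum_congr rfl (fun i hi => (mem_filter.mp hi).2), Finset.sum_const, smul_eq_mul]
      omega
    rw [e1, e2]
  rw [hsplit] at hsum
  omega



noncomputable def mfun (Sf : Finset ℕ) (i : ℕ) : ℕ := (Sf.filter fun j => i ∈ Γ j).card

lemma mfun_le_val {Sf : Finset ℕ} (hS : Sf ⊆ Icc 1 (n-2)) (i : ℕ) :
    mfun Γ Sf i ≤ valence n Γ i :=
  card_le_card (filter_subset_filter _ hS)

lemma mfun_le_s (Sf : Finset ℕ) (i : ℕ) : mfun Γ Sf i ≤ Sf.card :=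
  card_le_card (filter_subset _ _)

lemma mfun_pos_iff (Sf : Finset ℕ) (i : ℕ) :
    i ∈ Sf.biUnion Γ ↔ 0 < mfun Γ Sf i := by
  rw [mfun, card_pos]
  constructor
  · rintro h
    obtain ⟨j, hj, hij⟩ := mem_biUnion.mp h
    exact ⟨j, mem_filter.mpr ⟨hj, hij⟩⟩
  · rintro ⟨j, hj⟩
    rw [mem_filter] at hj
    exact mem_biUnion.mpr ⟨j, hj.1, hj.2⟩

lemma sum_mfun (hsub : ∀ j ∈ Icc 1 (n-2), Γ j ⊆ Icc 1 n)
    (hcard : ∀ j ∈ Icc 1 (n-2), (Γ j).card = 3)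
    {Sf : Finset ℕ} (hS : Sf ⊆ Icc 1 (n-2)) :
    ∑ i ∈ Icc 1 n, mfun Γ Sf i = 3 * Sf.card := by
  unfold mfun
  rw [show ∑ i ∈ Icc 1 n, (Sf.filter fun j => i ∈ Γ j).card
      = ∑ j ∈ Sf, ((Icc 1 n).filter fun i => i ∈ Γ j).card by
    simp only [card_filter]; exact Finset.sum_comm]
  have : ∀ j ∈ Sf, ((Icc 1 n).filter fun i => i ∈ Γ j).card = 3 := by
    intro j hj
    have he : (Icc 1 n).filter (fun i => i ∈ Γ j) = Γ j := by
      ext x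
      simp only [mem_filter]
      exact ⟨fun h => h.2, fun h => ⟨hsub j (hS hj) h, h⟩⟩
    rw [he, hcard j (hS hj)]
  rw [Finset.sum_congr rfl this, Finset.sum_const, smul_eq_mul]
  ring

lemma sum_mfun_USet (hsub : ∀ j ∈ Icc 1 (n-2), Γ j ⊆ Icc 1 n)
    (hcard : ∀ j ∈ Icc 1 (n-2), (Γ j).card = 3)
    {Sf : Finset ℕ} (hS : Sf ⊆ Icc 1 (n-2)) :
    ∑ i ∈ Sf.biUnion Γ, mfun Γ Sf i = 3 * Sf.card := by
  rw [← sum_mfun n Γ hsub hcard hS]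
  apply Finset.sum_subset
  · intro x hx
    obtain ⟨j, hj, hxj⟩ := mem_biUnion.mp hx
    exact hsub j (hS hj) hxj
  · intro x _ hx
    have := (mfun_pos_iff Γ Sf x).not.mp hx
    omega

lemma sum_mfun_sub_one (hsub : ∀ j ∈ Icc 1 (n-2), Γ j ⊆ Icc 1 n)
    (hcard : ∀ j ∈ Icc 1 (n-2), (Γ j).card = 3)
    {Sf : Finset ℕ} (hS : Sf ⊆ Icc 1 (n-2)) :
    (∑ i ∈ Sf.biUnion Γ, (mfun Γ Sf i - 1)) + (Sf.biUnion Γ).card = 3 * Sf.card := by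
  rw [← sum_mfun_USet n Γ hsub hcard hS]
  rw [Finset.card_eq_sum_ones (Sf.biUnion Γ), ← Finset.sum_add_distrib]
  apply Finset.sum_congr rfl
  intro i hi
  have := (mfun_pos_iff Γ Sf i).mp hi
  omega


noncomputable def othT (i j : ℕ) : Finset ℕ := ((Icc 1 (n-2)).filter fun j' => i ∈ Γ j').erase j

noncomputable def oth (i j : ℕ) : ℕ :=
  if h : (othT n Γ i j).Nonempty then (othT n Γ i j).min' h else 0

lemma oth_spec {i j : ℕ} (hval2 : valence n Γ i = 2) (hj : j ∈ Icc 1 (n-2)) (hij : i ∈ Γ j) :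
    oth n Γ i j ∈ Icc 1 (n-2) ∧ i ∈ Γ (oth n Γ i j) ∧ oth n Γ i j ≠ j ∧
    (∀ j', j' ∈ Icc 1 (n-2) → i ∈ Γ j' → j' ≠ j → j' = oth n Γ i j) := by
  have hjmem : j ∈ (Icc 1 (n-2)).filter fun j' => i ∈ Γ j' := mem_filter.mpr ⟨hj, hij⟩
  have hcardT : (othT n Γ i j).card = 1 := by
    rw [othT, card_erase_of_mem hjmem]
    rw [valence] at hval2
    omega
  have hne : (othT n Γ i j).Nonempty := card_pos.mp (by omega)
  have hothmem : oth n Γ i j ∈ othT n Γ i j := by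
    rw [oth, dif_pos hne]; exact Finset.min'_mem _ hne
  obtain ⟨a, ha⟩ := Finset.card_eq_one.mp hcardT
  rw [ha, mem_singleton] at hothmem
  have hmem2 : oth n Γ i j ∈ (Icc 1 (n-2)).filter fun j' => i ∈ Γ j' := by
    have : oth n Γ i j ∈ othT n Γ i j := by rw [ha, hothmem]; exact mem_singleton_self a
    exact mem_of_mem_erase this
  have hne_j : oth n Γ i j ≠ j := by
    have : oth n Γ i j ∈ othT n Γ i j := by rw [ha, hothmem]; exact mem_singleton_self a
    exact ne_of_mem_erase this
  refine ⟨(mem_filter.mp hmem2).1, (mem_filter.mp hmem2).2, hne_j, ?_⟩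
  intro j' hj' hij' hjj
  have : j' ∈ othT n Γ i j := mem_erase.mpr ⟨hjj, mem_filter.mpr ⟨hj', hij'⟩⟩
  rw [ha, mem_singleton] at this
  rw [this, ← hothmem]


lemma deg_blv_ge (hn : 6 ≤ n)
    (hsub : ∀ j ∈ Icc 1 (n-2), Γ j ⊆ Icc 1 n)
    (hcard : ∀ j ∈ Icc 1 (n-2), (Γ j).card = 3)
    (hval : ∀ i ∈ Icc 1 n, valence n Γ i = 2 ∨ valence n Γ i = 3)
    (hdag : ∀ S ⊆ Finset.Icc 1 (n - 2), 2 ≤ S.card → S.card ≤ n - 3 →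
      S.card + 3 ≤ (S.biUnion Γ).card)
    (jL : ℕ) (v : ℕ ⊕ ℕ)
    {j : ℕ} (hj : j ∈ Icc 1 (n-2)) :
    3 ≤ ((Uf n Γ).filter fun q => hatAdj n Γ (Sum.inl jL) v (blv j) q).card := by
  have hΓ3 : (Γ j).card = 3 := hcard j hj
  rw [← hΓ3]
  apply Finset.card_le_card_of_injOn (f := fun i =>
    if valence n Γ i = 3 then (if jL = j ∧ v = Sum.inr i then ZZ else whv i)
    else (if (jL = j ∧ v = Sum.inl (oth n Γ i j)) ∨ (v = Sum.inl j ∧ oth n Γ i j = jL)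
          then ZZ else blv (oth n Γ i j)))
  · intro i hi
    simp only [Finset.mem_coe] at hi ⊢
    have hiN : i ∈ Icc 1 n := hsub j hj hi
    rcases hval i hiN with h2 | h3
    · rw [if_neg (show ¬ valence n Γ i = 3 by simp [h2])]
      obtain ⟨ho1, ho2, ho3, _⟩ := oth_spec n Γ h2 hj hi
      by_cases htrig : (jL = j ∧ v = Sum.inl (oth n Γ i j)) ∨ (v = Sum.inl j ∧ oth n Γ i j = jL)
      · rw [if_pos htrig]
        refine mem_filter.mpr ⟨ZZ_mem_Uf n Γ, Or.inr ⟨Sum.inl j, Or.inl ⟨rfl, rfl⟩, ?_⟩⟩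
        rcases htrig with ⟨h, _⟩ | ⟨h, _⟩
        · exact Or.inl (by rw [h])
        · exact Or.inr h.symm
      · rw [if_neg htrig]
        refine mem_filter.mpr ⟨blv_mem_Uf n Γ ho1, Or.inl ⟨Sum.inl j, Sum.inl (oth n Γ i j),
          rfl, rfl, Or.inr ⟨j, oth n Γ i j, rfl, rfl, Ne.symm ho3, hj, ho1, i, h2, hi, ho2⟩, ?_⟩⟩
        rintro (⟨ha, hb⟩ | ⟨ha, hb⟩)
        · exact htrig (Or.inl ⟨(Sum.inl.inj ha).symm, hb.symm⟩)
        · exact htrig (Or.inr ⟨ha.symm, Sum.inl.inj hb⟩)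
    · rw [if_pos h3]
      by_cases htrig : jL = j ∧ v = Sum.inr i
      · rw [if_pos htrig]
        exact mem_filter.mpr ⟨ZZ_mem_Uf n Γ, Or.inr ⟨Sum.inl j, Or.inl ⟨rfl, rfl⟩,
          Or.inl (by rw [htrig.1])⟩⟩
      · rw [if_neg htrig]
        refine mem_filter.mpr ⟨whv_mem_Uf n Γ (mem_filter.mpr ⟨hiN, h3⟩),
          Or.inl ⟨Sum.inl j, Sum.inr i, rfl, rfl, Or.inl ⟨j, i, Or.inl ⟨rfl, rfl⟩, hj, h3, hi⟩, ?_⟩⟩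
        rintro (⟨ha, hb⟩ | ⟨ha, hb⟩)
        · exact htrig ⟨(Sum.inl.inj ha).symm, hb.symm⟩
        · exact (by simp at hb : False)
  · intro i1 h1 i2 h2 heq
    by_contra hne
    have h1N : i1 ∈ Icc 1 n := hsub j hj h1
    have h2N : i2 ∈ Icc 1 n := hsub j hj h2
    simp only at heq
    rcases hval i1 h1N with ha2 | ha3 <;> rcases hval i2 h2N with hb2 | hb3
    · -- both valence 2
      rw [if_neg (show ¬ valence n Γ i1 = 3 by simp [ha2]),
        if_neg (show ¬ valence n Γ i2 = 3 by simp [hb2])] at heq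
      obtain ⟨ho1a, ho2a, ho3a, -⟩ := oth_spec n Γ ha2 hj h1
      obtain ⟨ho1b, ho2b, ho3b, -⟩ := oth_spec n Γ hb2 hj h2
      have hoo : oth n Γ i1 j = oth n Γ i2 j := by
        by_cases t1 : (jL = j ∧ v = Sum.inl (oth n Γ i1 j)) ∨ (v = Sum.inl j ∧ oth n Γ i1 j = jL)
          <;> by_cases t2 : (jL = j ∧ v = Sum.inl (oth n Γ i2 j)) ∨ (v = Sum.inl j ∧ oth n Γ i2 j = jL)
        · rcases t1 with ⟨u1, u2⟩ | ⟨u1, u2⟩ <;> rcases t2 with ⟨w1, w2⟩ | ⟨w1, w2⟩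
          · exact Sum.inl.inj (u2.symm.trans w2)
          · exact absurd (Sum.inl.inj (u2.symm.trans w1)) ho3a
          · exact absurd (Sum.inl.inj (w2.symm.trans u1)) ho3b
          · rw [u2, w2]
        · rw [if_pos t1, if_neg t2] at heq; exact absurd heq (by simp [ZZ, blv])
        · rw [if_neg t1, if_pos t2] at heq; exact absurd heq (by simp [ZZ, blv])
        · rw [if_neg t1, if_neg t2] at heq; exact Sum.inl.inj (Sum.inl.inj heq)
      exact pair_inter n Γ hn hcard hdag hj ho1a (Ne.symm ho3a) h1 ho2a
        h2 (by rw [hoo]; exact ho2b) hne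
    · -- i1 val 2, i2 val 3
      rw [if_neg (show ¬ valence n Γ i1 = 3 by simp [ha2]), if_pos hb3] at heq
      by_cases t2 : jL = j ∧ v = Sum.inr i2
      · rw [if_pos t2] at heq
        by_cases t1 : (jL = j ∧ v = Sum.inl (oth n Γ i1 j)) ∨ (v = Sum.inl j ∧ oth n Γ i1 j = jL)
        · rcases t1 with ⟨u1, u2⟩ | ⟨u1, u2⟩
          · rw [t2.2] at u2; exact absurd u2 (by simp)
          · rw [t2.2] at u1; exact absurd u1 (by simp)
        · rw [if_neg t1] at heq; exact absurd heq (by simp [ZZ, blv])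
      · rw [if_neg t2] at heq
        by_cases t1 : (jL = j ∧ v = Sum.inl (oth n Γ i1 j)) ∨ (v = Sum.inl j ∧ oth n Γ i1 j = jL)
        · rw [if_pos t1] at heq; exact absurd heq (by simp [ZZ, whv])
        · rw [if_neg t1] at heq; exact absurd heq (by simp [blv, whv])
    · -- i1 val 3, i2 val 2
      rw [if_pos ha3, if_neg (show ¬ valence n Γ i2 = 3 by simp [hb2])] at heq
      by_cases t1 : jL = j ∧ v = Sum.inr i1
      · rw [if_pos t1] at heq
        by_cases t2 : (jL = j ∧ v = Sum.inl (oth n Γ i2 j)) ∨ (v = Sum.inl j ∧ oth n Γ i2 j = jL)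
        · rcases t2 with ⟨u1, u2⟩ | ⟨u1, u2⟩
          · rw [t1.2] at u2; exact absurd u2 (by simp)
          · rw [t1.2] at u1; exact absurd u1 (by simp)
        · rw [if_neg t2] at heq; exact absurd heq (by simp [ZZ, blv])
      · rw [if_neg t1] at heq
        by_cases t2 : (jL = j ∧ v = Sum.inl (oth n Γ i2 j)) ∨ (v = Sum.inl j ∧ oth n Γ i2 j = jL)
        · rw [if_pos t2] at heq; exact absurd heq (by simp [ZZ, whv])
        · rw [if_neg t2] at heq; exact absurd heq (by simp [blv, whv])
    · -- both valence 3
      rw [if_pos ha3, if_pos hb3] at heq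
      by_cases t1 : jL = j ∧ v = Sum.inr i1 <;> by_cases t2 : jL = j ∧ v = Sum.inr i2
      · exact hne (Sum.inr.inj (t1.2.symm.trans t2.2))
      · rw [if_pos t1, if_neg t2] at heq; exact absurd heq (by simp [ZZ, whv])
      · rw [if_neg t1, if_pos t2] at heq; exact absurd heq (by simp [ZZ, whv])
      · rw [if_neg t1, if_neg t2] at heq
        exact hne (Sum.inr.inj (Sum.inl.inj heq))

lemma deg_whv_ge (hn : 6 ≤ n)
    (hsub : ∀ j ∈ Icc 1 (n-2), Γ j ⊆ Icc 1 n)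
    (jL : ℕ) (v : ℕ ⊕ ℕ)
    {i : ℕ} (hi3 : valence n Γ i = 3) (hiN : i ∈ Icc 1 n) :
    3 ≤ ((Uf n Γ).filter fun q => hatAdj n Γ (Sum.inl jL) v (whv i) q).card := by
  have hT3 : ((Icc 1 (n-2)).filter fun j => i ∈ Γ j).card = 3 := hi3
  rw [← hT3]
  apply Finset.card_le_card_of_injOn (f := fun j =>
    if v = Sum.inr i ∧ j = jL then ZZ else blv j)
  · intro j hj
    simp only [Finset.mem_coe] at hj ⊢
    rw [mem_filter] at hj
    by_cases t : v = Sum.inr i ∧ j = jL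
    · rw [if_pos t]
      exact mem_filter.mpr ⟨ZZ_mem_Uf n Γ, Or.inr ⟨Sum.inr i, Or.inl ⟨rfl, rfl⟩, Or.inr t.1.symm⟩⟩
    · rw [if_neg t]
      refine mem_filter.mpr ⟨blv_mem_Uf n Γ hj.1, Or.inl ⟨Sum.inr i, Sum.inl j, rfl, rfl,
        Or.inl ⟨j, i, Or.inr ⟨rfl, rfl⟩, hj.1, hi3, hj.2⟩, ?_⟩⟩
      rintro (⟨ha, hb⟩ | ⟨ha, hb⟩)
      · exact (by simp at ha : False)
      · exact t ⟨ha.symm, Sum.inl.inj hb⟩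
  · intro j1 h1 j2 h2 heq
    simp only at heq
    by_cases t1 : v = Sum.inr i ∧ j1 = jL <;> by_cases t2 : v = Sum.inr i ∧ j2 = jL
    · rw [t1.2, t2.2]
    · rw [if_pos t1, if_neg t2] at heq; exact absurd heq (by simp [ZZ, blv])
    · rw [if_neg t1, if_pos t2] at heq; exact absurd heq (by simp [ZZ, blv])
    · rw [if_neg t1, if_neg t2] at heq; exact Sum.inl.inj (Sum.inl.inj heq)

lemma deg_ZZ_ge
    (jL : ℕ) (v : ℕ ⊕ ℕ) (hjL : jL ∈ Icc 1 (n-2)) (hvU : Sum.inl v ∈ Uf n Γ)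
    (hLv : Sum.inl jL ≠ v) :
    2 ≤ ((Uf n Γ).filter fun q => hatAdj n Γ (Sum.inl jL) v ZZ q).card := by
  have hsub2 : ({Sum.inl (Sum.inl jL), Sum.inl v} : Finset ((ℕ ⊕ ℕ) ⊕ Unit)) ⊆
      (Uf n Γ).filter fun q => hatAdj n Γ (Sum.inl jL) v ZZ q := by
    intro x hx
    rcases mem_insert.mp hx with h | h
    · subst h
      exact mem_filter.mpr ⟨blv_mem_Uf n Γ hjL,
        Or.inr ⟨Sum.inl jL, Or.inr ⟨rfl, rfl⟩, Or.inl rfl⟩⟩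
    · rw [mem_singleton.mp h]
      exact mem_filter.mpr ⟨hvU, Or.inr ⟨v, Or.inr ⟨rfl, rfl⟩, Or.inr rfl⟩⟩
  calc 2 = ({Sum.inl (Sum.inl jL), Sum.inl v} : Finset ((ℕ ⊕ ℕ) ⊕ Unit)).card := by
        rw [card_pair (by simpa using hLv)]
      _ ≤ _ := card_le_card hsub2

lemma card_prod_filter {α β : Type*} [DecidableEq α] (A : Finset α) (B : Finset β)
    (R : α × β → Prop) :
    ((A ×ˢ B).filter R).card = ∑ a ∈ A, (B.filter fun b => R (a, b)).card := by
  rw [Finset.card_eq_sum_card_fiberwise (f := Prod.fst) (t := A)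
    (fun p hp => (Finset.mem_product.mp (Finset.mem_filter.mp hp).1).1)]
  refine Finset.sum_congr rfl fun a ha => ?_
  refine Finset.card_bij (fun p _ => p.2) ?_ ?_ ?_
  · intro p hp
    simp only [Finset.mem_filter, Finset.mem_product] at hp ⊢
    obtain ⟨⟨⟨-, hb⟩, hR⟩, hfst⟩ := hp
    refine ⟨hb, ?_⟩
    have : p = (a, p.2) := Prod.ext hfst rfl
    rwa [← this]
  · intro p1 hp1 p2 hp2 hsnd
    have e1 : p1.1 = a := (Finset.mem_filter.mp hp1).2
    have e2 : p2.1 = a := (Finset.mem_filter.mp hp2).2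
    exact Prod.ext (e1.trans e2.symm) hsnd
  · intro b hb
    simp only [Finset.mem_filter] at hb
    exact ⟨(a, b), Finset.mem_filter.mpr ⟨Finset.mem_filter.mpr
      ⟨Finset.mem_product.mpr ⟨ha, hb.1⟩, hb.2⟩, rfl⟩, rfl⟩

def bpredD (L v : ℕ ⊕ ℕ) (Y : Set ((ℕ ⊕ ℕ) ⊕ Unit)) :
    ((ℕ ⊕ ℕ) ⊕ Unit) × ((ℕ ⊕ ℕ) ⊕ Unit) → Prop :=
  fun p => hatAdj n Γ L v p.1 p.2 ∧ p.1 ∈ Y ∧ p.2 ∉ Y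

def ipredD (L v : ℕ ⊕ ℕ) (Y : Set ((ℕ ⊕ ℕ) ⊕ Unit)) :
    ((ℕ ⊕ ℕ) ⊕ Unit) × ((ℕ ⊕ ℕ) ⊕ Unit) → Prop :=
  fun p => hatAdj n Γ L v p.1 p.2 ∧ p.1 ∈ Y ∧ p.2 ∈ Y

lemma boundary_internal_deg (L v : ℕ ⊕ ℕ) (Y : Set ((ℕ ⊕ ℕ) ⊕ Unit)) :
    ((Uf n Γ ×ˢ Uf n Γ).filter (bpredD n Γ L v Y)).card
    + ((Uf n Γ ×ˢ Uf n Γ).filter (ipredD n Γ L v Y)).card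
    = ∑ a ∈ (Uf n Γ).filter (· ∈ Y), ((Uf n Γ).filter fun q => hatAdj n Γ L v a q).card := by
  rw [card_prod_filter (Uf n Γ) (Uf n Γ) (bpredD n Γ L v Y),
    card_prod_filter (Uf n Γ) (Uf n Γ) (ipredD n Γ L v Y)]
  rw [← Finset.sum_filter_add_sum_filter_not (Uf n Γ) (· ∈ Y)
    (fun a => ((Uf n Γ).filter fun b => bpredD n Γ L v Y (a, b)).card)]
  rw [← Finset.sum_filter_add_sum_filter_not (Uf n Γ) (· ∈ Y)
    (fun a => ((Uf n Γ).filter fun b => ipredD n Γ L v Y (a, b)).card)]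
  have hz1 : ∀ a ∈ (Uf n Γ).filter (fun x => ¬ x ∈ Y),
      ((Uf n Γ).filter fun b => bpredD n Γ L v Y (a, b)).card = 0 := by
    intro a ha
    rw [Finset.card_eq_zero, Finset.filter_eq_empty_iff]
    intro b _ hb
    exact (Finset.mem_filter.mp ha).2 hb.2.1
  have hz2 : ∀ a ∈ (Uf n Γ).filter (fun x => ¬ x ∈ Y),
      ((Uf n Γ).filter fun b => ipredD n Γ L v Y (a, b)).card = 0 := by
    intro a ha
    rw [Finset.card_eq_zero, Finset.filter_eq_empty_iff]
    intro b _ hb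
    exact (Finset.mem_filter.mp ha).2 hb.2.1
  rw [Finset.sum_eq_zero hz1, Finset.sum_eq_zero hz2, Nat.add_zero, Nat.add_zero]
  rw [← Finset.sum_add_distrib]
  refine Finset.sum_congr rfl fun a ha => ?_
  have haY : a ∈ Y := (Finset.mem_filter.mp ha).2
  have e1 : (Uf n Γ).filter (fun b => bpredD n Γ L v Y (a, b))
      = ((Uf n Γ).filter fun q => hatAdj n Γ L v a q).filter (fun b => b ∉ Y) := by
    rw [Finset.filter_filter]
    apply Finset.filter_congr
    intro b _
    constructor
    · rintro ⟨h1, _, h3⟩; exact ⟨h1, h3⟩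
    · rintro ⟨h1, h3⟩; exact ⟨h1, haY, h3⟩
  have e2 : (Uf n Γ).filter (fun b => ipredD n Γ L v Y (a, b))
      = ((Uf n Γ).filter fun q => hatAdj n Γ L v a q).filter (fun b => b ∈ Y) := by
    rw [Finset.filter_filter]
    apply Finset.filter_congr
    intro b _
    constructor
    · rintro ⟨h1, _, h3⟩; exact ⟨h1, h3⟩
    · rintro ⟨h1, h3⟩; exact ⟨h1, haY, h3⟩
  rw [e1, e2]
  rw [Nat.add_comm]
  exact Finset.card_filter_add_card_filter_not (fun b => b ∈ Y)

lemma Yf_eq (Y : Set ((ℕ ⊕ ℕ) ⊕ Unit)) :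
    (Uf n Γ).filter (· ∈ Y) = (((Icc 1 (n-2)).filter fun j => blv j ∈ Y).image blv
      ∪ ((V3 n Γ).filter fun i => whv i ∈ Y).image whv)
      ∪ (if ZZ ∈ Y then ({ZZ} : Finset ((ℕ ⊕ ℕ) ⊕ Unit)) else ∅) := by
  ext a
  rw [Finset.mem_filter]
  constructor
  · rintro ⟨haU, haY⟩
    simp only [Uf, Finset.mem_union, Finset.mem_image, Finset.mem_singleton] at haU
    rcases haU with (⟨j, hj, rfl⟩ | ⟨i, hi, rfl⟩) | rfl
    · exact Finset.mem_union.mpr (Or.inl (Finset.mem_union.mpr (Or.inl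
        (Finset.mem_image.mpr ⟨j, Finset.mem_filter.mpr ⟨hj, haY⟩, rfl⟩))))
    · exact Finset.mem_union.mpr (Or.inl (Finset.mem_union.mpr (Or.inr
        (Finset.mem_image.mpr ⟨i, Finset.mem_filter.mpr ⟨hi, haY⟩, rfl⟩))))
    · refine Finset.mem_union.mpr (Or.inr ?_)
      rw [if_pos haY]
      exact Finset.mem_singleton_self _
  · intro h
    rcases Finset.mem_union.mp h with h1 | hz
    · rcases Finset.mem_union.mp h1 with h2 | h2
      · obtain ⟨j, hj, rfl⟩ := Finset.mem_image.mp h2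
        obtain ⟨hj1, hj2⟩ := Finset.mem_filter.mp hj
        exact ⟨blv_mem_Uf n Γ hj1, hj2⟩
      · obtain ⟨i, hi, rfl⟩ := Finset.mem_image.mp h2
        obtain ⟨hi1, hi2⟩ := Finset.mem_filter.mp hi
        exact ⟨whv_mem_Uf n Γ hi1, hi2⟩
    · by_cases hzz : ZZ ∈ Y
      · rw [if_pos hzz, Finset.mem_singleton] at hz
        rw [hz]
        exact ⟨ZZ_mem_Uf n Γ, hzz⟩
      · rw [if_neg hzz] at hz
        exact absurd hz (Finset.notMem_empty a)

lemma deg_sum_ge (hn : 6 ≤ n)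
    (hsub : ∀ j ∈ Icc 1 (n-2), Γ j ⊆ Icc 1 n)
    (hcard : ∀ j ∈ Icc 1 (n-2), (Γ j).card = 3)
    (hval : ∀ i ∈ Icc 1 n, valence n Γ i = 2 ∨ valence n Γ i = 3)
    (hdag : ∀ S ⊆ Finset.Icc 1 (n - 2), 2 ≤ S.card → S.card ≤ n - 3 →
      S.card + 3 ≤ (S.biUnion Γ).card)
    (jL : ℕ) (v : ℕ ⊕ ℕ) (hjL : jL ∈ Icc 1 (n-2)) (hvU : Sum.inl v ∈ Uf n Γ)
    (hLv : Sum.inl jL ≠ v) (Y : Set ((ℕ ⊕ ℕ) ⊕ Unit)) :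
    3 * ((Icc 1 (n-2)).filter fun j => blv j ∈ Y).card
      + 3 * ((V3 n Γ).filter fun i => whv i ∈ Y).card
      + 2 * (if ZZ ∈ Y then 1 else 0)
    ≤ ∑ a ∈ (Uf n Γ).filter (· ∈ Y),
        ((Uf n Γ).filter fun q => hatAdj n Γ (Sum.inl jL) v a q).card := by
  rw [Yf_eq]
  have hdisj1 : Disjoint (((Icc 1 (n-2)).filter fun j => blv j ∈ Y).image blv)
      (((V3 n Γ).filter fun i => whv i ∈ Y).image whv) := by
    rw [Finset.disjoint_left]
    intro a ha hmem
    obtain ⟨j, _, hj⟩ := Finset.mem_image.mp ha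
    obtain ⟨i, _, hi⟩ := Finset.mem_image.mp hmem
    rw [← hj] at hi
    exact absurd hi (by simp [blv, whv])
  have hdisj2 : Disjoint ((((Icc 1 (n-2)).filter fun j => blv j ∈ Y).image blv)
      ∪ (((V3 n Γ).filter fun i => whv i ∈ Y).image whv))
      (if ZZ ∈ Y then ({ZZ} : Finset ((ℕ ⊕ ℕ) ⊕ Unit)) else ∅) := by
    rw [Finset.disjoint_right]
    intro a ha hmem
    by_cases hz : ZZ ∈ Y
    · rw [if_pos hz, Finset.mem_singleton] at ha
      rcases Finset.mem_union.mp hmem with h | h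
      · obtain ⟨j, _, hj⟩ := Finset.mem_image.mp h
        rw [ha] at hj
        exact absurd hj (by simp [blv, ZZ])
      · obtain ⟨i, _, hi⟩ := Finset.mem_image.mp h
        rw [ha] at hi
        exact absurd hi (by simp [whv, ZZ])
    · rw [if_neg hz] at ha
      exact absurd ha (Finset.notMem_empty a)
  rw [Finset.sum_union hdisj2, Finset.sum_union hdisj1]
  rw [Finset.sum_image (fun a _ b _ h => by simpa [blv] using h),
    Finset.sum_image (fun a _ b _ h => by simpa [whv] using h)]
  have hb : 3 * ((Icc 1 (n-2)).filter fun j => blv j ∈ Y).card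
      ≤ ∑ j ∈ (Icc 1 (n-2)).filter (fun j => blv j ∈ Y),
        ((Uf n Γ).filter fun q => hatAdj n Γ (Sum.inl jL) v (blv j) q).card := by
    have : 3 * ((Icc 1 (n-2)).filter fun j => blv j ∈ Y).card
        = ∑ _j ∈ (Icc 1 (n-2)).filter (fun j => blv j ∈ Y), 3 := by
      rw [Finset.sum_const, smul_eq_mul, Nat.mul_comm]
    rw [this]
    apply Finset.sum_le_sum
    intro j hj
    exact deg_blv_ge n Γ hn hsub hcard hval hdag jL v (Finset.mem_filter.mp hj).1
  have hw : 3 * ((V3 n Γ).filter fun i => whv i ∈ Y).card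
      ≤ ∑ i ∈ (V3 n Γ).filter (fun i => whv i ∈ Y),
        ((Uf n Γ).filter fun q => hatAdj n Γ (Sum.inl jL) v (whv i) q).card := by
    have : 3 * ((V3 n Γ).filter fun i => whv i ∈ Y).card
        = ∑ _i ∈ (V3 n Γ).filter (fun i => whv i ∈ Y), 3 := by
      rw [Finset.sum_const, smul_eq_mul, Nat.mul_comm]
    rw [this]
    apply Finset.sum_le_sum
    intro i hi
    have := Finset.mem_filter.mp (Finset.mem_filter.mp hi).1
    exact deg_whv_ge n Γ hn hsub jL v this.2 this.1
  have hzb : 2 * (if ZZ ∈ Y then 1 else 0)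
      ≤ ∑ a ∈ (if ZZ ∈ Y then ({ZZ} : Finset ((ℕ ⊕ ℕ) ⊕ Unit)) else ∅),
        ((Uf n Γ).filter fun q => hatAdj n Γ (Sum.inl jL) v a q).card := by
    by_cases hz : ZZ ∈ Y
    · rw [if_pos hz, if_pos hz, Finset.sum_singleton, Nat.mul_one]
      exact deg_ZZ_ge n Γ jL v hjL hvU hLv
    · rw [if_neg hz, if_neg hz]
      simp
  omega

lemma card_pair_le {α : Type*} [DecidableEq α] (a b : α) : ({a, b} : Finset α).card ≤ 2 := by
  apply le_trans (Finset.card_insert_le a {b})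
  simp

lemma he_facts (hsub : ∀ j ∈ Icc 1 (n-2), Γ j ⊆ Icc 1 n)
    {jL : ℕ} {v : ℕ ⊕ ℕ} (he : piAdj n Γ (Sum.inl jL) v) :
    jL ∈ Icc 1 (n-2) ∧ ((Sum.inl v : (ℕ ⊕ ℕ) ⊕ Unit) ∈ Uf n Γ) ∧ Sum.inl jL ≠ v := by
  rcases he with ⟨j, i, hab, hj, hi3, hiΓ⟩ | ⟨j, j', hx, hy, hjj, hj, hj', -⟩
  · rcases hab with ⟨h1, h2⟩ | ⟨h1, h2⟩
    · have hjL : jL = j := Sum.inl.inj h1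
      subst hjL
      have hiN : i ∈ Icc 1 n := mem_Icc_of_val_pos n Γ hsub (by omega)
      refine ⟨hj, ?_, ?_⟩
      · rw [h2]
        exact whv_mem_Uf n Γ (Finset.mem_filter.mpr ⟨hiN, hi3⟩)
      · rw [h2]; simp
    · exact absurd h1 (by simp)
  · have hjL : jL = j := Sum.inl.inj hx
    subst hjL
    refine ⟨hj, ?_, ?_⟩
    · rw [hy]
      exact blv_mem_Uf n Γ hj'
    · rw [hy]
      simp only [ne_eq, Sum.inl.injEq]
      exact hjj

lemma internal_bound (hn : 6 ≤ n)
    (hsub : ∀ j ∈ Icc 1 (n-2), Γ j ⊆ Icc 1 n)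
    (jL : ℕ) (v : ℕ ⊕ ℕ) (he : piAdj n Γ (Sum.inl jL) v)
    (Y : Set ((ℕ ⊕ ℕ) ⊕ Unit)) :
    ((Uf n Γ ×ˢ Uf n Γ).filter (ipredD n Γ (Sum.inl jL) v Y)).card
      + 2 * ((if blv jL ∈ Y then 1 else 0) * (if (Sum.inl v : (ℕ ⊕ ℕ) ⊕ Unit) ∈ Y then 1 else 0))
    ≤ 2 * (∑ i ∈ (V3 n Γ).filter (fun i => whv i ∈ Y),
          mfun Γ ((Icc 1 (n-2)).filter fun j => blv j ∈ Y) i)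
      + (∑ i ∈ V2 n Γ, (mfun Γ ((Icc 1 (n-2)).filter fun j => blv j ∈ Y) i
            * mfun Γ ((Icc 1 (n-2)).filter fun j => blv j ∈ Y) i
            - mfun Γ ((Icc 1 (n-2)).filter fun j => blv j ∈ Y) i))
      + (2 * ((if ZZ ∈ Y then 1 else 0) * (if blv jL ∈ Y then 1 else 0))
          + 2 * ((if ZZ ∈ Y then 1 else 0) * (if (Sum.inl v : (ℕ ⊕ ℕ) ⊕ Unit) ∈ Y then 1 else 0))) := by
  obtain ⟨hjL, hvU, hLv⟩ := he_facts n Γ hsub he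
  set Sf := (Icc 1 (n-2)).filter (fun j => blv j ∈ Y) with hSf
  set Wf := (V3 n Γ).filter (fun i => whv i ∈ Y) with hWf
  set Lp : (ℕ ⊕ ℕ) ⊕ Unit := blv jL with hLp
  set vp : (ℕ ⊕ ℕ) ⊕ Unit := Sum.inl v with hvp
  have hLpvp : Lp ≠ vp := by
    rw [hLp, hvp, blv]
    simp only [ne_eq, Sum.inl.injEq]
    exact hLv
  set IP := (Uf n Γ ×ˢ Uf n Γ).filter (ipredD n Γ (Sum.inl jL) v Y) with hIP
  set RemP := (if Lp ∈ Y ∧ vp ∈ Y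
      then ({(Lp, vp), (vp, Lp)} : Finset (((ℕ ⊕ ℕ) ⊕ Unit) × ((ℕ ⊕ ℕ) ⊕ Unit)))
      else ∅) with hRemP
  set Pbw := Wf.biUnion (fun i => (Sf.filter (fun j => i ∈ Γ j)).image
      (fun j => ((blv j, whv i) : ((ℕ ⊕ ℕ) ⊕ Unit) × ((ℕ ⊕ ℕ) ⊕ Unit)))) with hPbw
  set Pwb := Wf.biUnion (fun i => (Sf.filter (fun j => i ∈ Γ j)).image
      (fun j => ((whv i, blv j) : ((ℕ ⊕ ℕ) ⊕ Unit) × ((ℕ ⊕ ℕ) ⊕ Unit)))) with hPwb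
  set Pbb := (V2 n Γ).biUnion (fun i => ((Sf.filter (fun j => i ∈ Γ j)).offDiag).image
      (fun q => ((blv q.1, blv q.2) : ((ℕ ⊕ ℕ) ⊕ Unit) × ((ℕ ⊕ ℕ) ⊕ Unit)))) with hPbb
  set PZ := (if Lp ∈ Y ∧ ZZ ∈ Y
      then ({(Lp, ZZ), (ZZ, Lp)} : Finset (((ℕ ⊕ ℕ) ⊕ Unit) × ((ℕ ⊕ ℕ) ⊕ Unit)))
      else ∅)
    ∪ (if vp ∈ Y ∧ ZZ ∈ Y
      then ({(vp, ZZ), (ZZ, vp)} : Finset (((ℕ ⊕ ℕ) ⊕ Unit) × ((ℕ ⊕ ℕ) ⊕ Unit)))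
      else ∅) with hPZ
  -- the removed pairs are not hat-adjacent
  have hnot1 : ¬ hatAdj n Γ (Sum.inl jL) v Lp vp := by
    rintro (⟨a, b, hx, hy, hpi, hnot⟩ | ⟨a, (⟨hx, hy⟩ | ⟨hx, hy⟩), hav⟩)
    · rw [hLp, blv] at hx
      rw [hvp] at hy
      exact hnot (Or.inl ⟨(Sum.inl.inj hx).symm, (Sum.inl.inj hy).symm⟩)
    · rw [hvp] at hy; exact absurd hy (by simp)
    · rw [hLp, blv] at hx; exact absurd hx (by simp [ZZ])
  have hnot2 : ¬ hatAdj n Γ (Sum.inl jL) v vp Lp := by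
    rintro (⟨a, b, hx, hy, hpi, hnot⟩ | ⟨a, (⟨hx, hy⟩ | ⟨hx, hy⟩), hav⟩)
    · rw [hLp, blv] at hy
      rw [hvp] at hx
      exact hnot (Or.inr ⟨(Sum.inl.inj hx).symm, (Sum.inl.inj hy).symm⟩)
    · rw [hLp, blv] at hy; exact absurd hy (by simp)
    · rw [hvp] at hx; exact absurd hx (by simp [ZZ])
  have hdisj : Disjoint IP RemP := by
    rw [Finset.disjoint_right]
    intro p hpR hpI
    have hadj : hatAdj n Γ (Sum.inl jL) v p.1 p.2 := (Finset.mem_filter.mp hpI).2.1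
    by_cases hc : Lp ∈ Y ∧ vp ∈ Y
    · rw [hRemP] at hpR
      rw [if_pos hc] at hpR
      rcases Finset.mem_insert.mp hpR with h | h
      · rw [h] at hadj; exact hnot1 hadj
      · rw [Finset.mem_singleton.mp h] at hadj; exact hnot2 hadj
    · rw [hRemP, if_neg hc] at hpR
      exact absurd hpR (Finset.notMem_empty p)
  have hRemCard : RemP.card
      = 2 * ((if Lp ∈ Y then 1 else 0) * (if vp ∈ Y then 1 else 0)) := by
    by_cases hL : Lp ∈ Y <;> by_cases hv' : vp ∈ Y
    · rw [hRemP, if_pos ⟨hL, hv'⟩, if_pos hL, if_pos hv']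
      rw [Finset.card_insert_of_notMem (by
        simp only [Finset.mem_singleton]
        intro h
        exact hLpvp (congrArg Prod.fst h)), Finset.card_singleton]
    · rw [hRemP, if_neg (by tauto), if_pos hL, if_neg hv']; simp
    · rw [hRemP, if_neg (by tauto), if_neg hL, if_pos hv']; simp
    · rw [hRemP, if_neg (by tauto), if_neg hL, if_neg hv']; simp
  -- cover of pi-adjacent pairs with both endpoints in Y
  have hcover : ∀ a b : ℕ ⊕ ℕ, piAdj n Γ a b →
      ((Sum.inl a : (ℕ ⊕ ℕ) ⊕ Unit) ∈ Y) → ((Sum.inl b : (ℕ ⊕ ℕ) ⊕ Unit) ∈ Y) →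
      ((Sum.inl a, Sum.inl b) : ((ℕ ⊕ ℕ) ⊕ Unit) × ((ℕ ⊕ ℕ) ⊕ Unit)) ∈ Pbw ∪ Pwb ∪ Pbb := by
    intro a b hpi ha hb
    rcases hpi with ⟨j, i, hab, hj, hi3, hiΓ⟩ | ⟨j, j', ha', hb', hjj, hj, hj', i, hi2, hij, hij'⟩
    · have hiN : i ∈ Icc 1 n := mem_Icc_of_val_pos n Γ hsub (by omega)
      rcases hab with ⟨rfl, rfl⟩ | ⟨rfl, rfl⟩
      · refine Finset.mem_union.mpr (Or.inl (Finset.mem_union.mpr (Or.inl ?_)))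
        refine Finset.mem_biUnion.mpr ⟨i, Finset.mem_filter.mpr
          ⟨Finset.mem_filter.mpr ⟨hiN, hi3⟩, hb⟩, ?_⟩
        exact Finset.mem_image.mpr ⟨j, Finset.mem_filter.mpr
          ⟨Finset.mem_filter.mpr ⟨hj, ha⟩, hiΓ⟩, rfl⟩
      · refine Finset.mem_union.mpr (Or.inl (Finset.mem_union.mpr (Or.inr ?_)))
        refine Finset.mem_biUnion.mpr ⟨i, Finset.mem_filter.mpr
          ⟨Finset.mem_filter.mpr ⟨hiN, hi3⟩, ha⟩, ?_⟩
        exact Finset.mem_image.mpr ⟨j, Finset.mem_filter.mpr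
          ⟨Finset.mem_filter.mpr ⟨hj, hb⟩, hiΓ⟩, rfl⟩
    · subst ha' hb'
      have hiN : i ∈ Icc 1 n := mem_Icc_of_val_pos n Γ hsub (by omega)
      refine Finset.mem_union.mpr (Or.inr ?_)
      refine Finset.mem_biUnion.mpr ⟨i, Finset.mem_filter.mpr ⟨hiN, hi2⟩, ?_⟩
      refine Finset.mem_image.mpr ⟨(j, j'), Finset.mem_offDiag.mpr
        ⟨Finset.mem_filter.mpr ⟨Finset.mem_filter.mpr ⟨hj, ha⟩, hij⟩,
         Finset.mem_filter.mpr ⟨Finset.mem_filter.mpr ⟨hj', hb⟩, hij'⟩, ?_⟩, rfl⟩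
      simp only [ne_eq]
      exact hjj
  have hsubcov : IP ∪ RemP ⊆ (Pbw ∪ Pwb ∪ Pbb) ∪ PZ := by
    intro p hp
    rcases Finset.mem_union.mp hp with hpI | hpR
    · obtain ⟨hprod, hadj, h1, h2⟩ := Finset.mem_filter.mp hpI
      rcases hadj with ⟨a, b, hx, hy, hpi, -⟩ | ⟨a, hxy, hav⟩
      · have hpeq : p = (Sum.inl a, Sum.inl b) := Prod.ext hx hy
        rw [hx] at h1
        rw [hy] at h2
        rw [hpeq]
        exact Finset.mem_union.mpr (Or.inl (hcover a b hpi h1 h2))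
      · refine Finset.mem_union.mpr (Or.inr ?_)
        rcases hxy with ⟨hx, hy⟩ | ⟨hx, hy⟩
        · have hpeq : p = (Sum.inl a, ZZ) := Prod.ext hx hy
          rw [hx] at h1
          rw [hy] at h2
          rcases hav with rfl | rfl
          · refine Finset.mem_union.mpr (Or.inl ?_)
            rw [if_pos ⟨h1, h2⟩]
            rw [hpeq]
            exact Finset.mem_insert_self _ _
          · refine Finset.mem_union.mpr (Or.inr ?_)
            rw [if_pos ⟨h1, h2⟩]
            rw [hpeq]
            exact Finset.mem_insert_self _ _
        · have hpeq : p = (ZZ, Sum.inl a) := Prod.ext hx hy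
          rw [hx] at h1
          rw [hy] at h2
          rcases hav with rfl | rfl
          · refine Finset.mem_union.mpr (Or.inl ?_)
            rw [if_pos ⟨h2, h1⟩]
            rw [hpeq]
            exact Finset.mem_insert.mpr (Or.inr (Finset.mem_singleton_self _))
          · refine Finset.mem_union.mpr (Or.inr ?_)
            rw [if_pos ⟨h2, h1⟩]
            rw [hpeq]
            exact Finset.mem_insert.mpr (Or.inr (Finset.mem_singleton_self _))
    · by_cases hc : Lp ∈ Y ∧ vp ∈ Y
      · rw [hRemP, if_pos hc] at hpR
        rcases Finset.mem_insert.mp hpR with h | h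
        · rw [h]
          exact Finset.mem_union.mpr (Or.inl (hcover (Sum.inl jL) v he hc.1 hc.2))
        · rw [Finset.mem_singleton.mp h]
          have hsymm : piAdj n Γ v (Sum.inl jL) := by
            rcases he with ⟨j, i, hab, hj, hi3, hiΓ⟩ | ⟨j, j', hx, hy, hjj, hj, hj', i, hw⟩
            · rcases hab with ⟨h1, h2⟩ | ⟨h1, h2⟩
              · exact Or.inl ⟨j, i, Or.inr ⟨h2, h1⟩, hj, hi3, hiΓ⟩
              · exact Or.inl ⟨j, i, Or.inl ⟨h2, h1⟩, hj, hi3, hiΓ⟩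
            · exact Or.inr ⟨j', j, hy, hx, Ne.symm hjj, hj', hj, i, hw.1, hw.2.2, hw.2.1⟩
          exact Finset.mem_union.mpr (Or.inl (hcover v (Sum.inl jL) hsymm hc.2 hc.1))
      · rw [hRemP, if_neg hc] at hpR
        exact absurd hpR (Finset.notMem_empty p)
  -- cardinality bounds on the pieces
  have hPbwC : Pbw.card ≤ ∑ i ∈ Wf, mfun Γ Sf i := by
    apply le_trans (Finset.card_biUnion_le)
    apply Finset.sum_le_sum
    intro i _
    exact le_trans (Finset.card_image_le) (le_of_eq rfl)
  have hPwbC : Pwb.card ≤ ∑ i ∈ Wf, mfun Γ Sf i := by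
    apply le_trans (Finset.card_biUnion_le)
    apply Finset.sum_le_sum
    intro i _
    exact le_trans (Finset.card_image_le) (le_of_eq rfl)
  have hPbbC : Pbb.card ≤ ∑ i ∈ V2 n Γ, (mfun Γ Sf i * mfun Γ Sf i - mfun Γ Sf i) := by
    apply le_trans (Finset.card_biUnion_le)
    apply Finset.sum_le_sum
    intro i _
    apply le_trans (Finset.card_image_le)
    rw [Finset.offDiag_card]
    exact le_of_eq rfl
  have hPZ1 : (if Lp ∈ Y ∧ ZZ ∈ Y
      then ({(Lp, ZZ), (ZZ, Lp)} : Finset (((ℕ ⊕ ℕ) ⊕ Unit) × ((ℕ ⊕ ℕ) ⊕ Unit)))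
      else ∅).card ≤ 2 * ((if ZZ ∈ Y then 1 else 0) * (if Lp ∈ Y then 1 else 0)) := by
    by_cases hc : Lp ∈ Y ∧ ZZ ∈ Y
    · rw [if_pos hc, if_pos hc.2, if_pos hc.1]
      exact le_trans (card_pair_le _ _) (by norm_num)
    · rw [if_neg hc]
      simp
  have hPZ2 : (if vp ∈ Y ∧ ZZ ∈ Y
      then ({(vp, ZZ), (ZZ, vp)} : Finset (((ℕ ⊕ ℕ) ⊕ Unit) × ((ℕ ⊕ ℕ) ⊕ Unit)))
      else ∅).card ≤ 2 * ((if ZZ ∈ Y then 1 else 0) * (if vp ∈ Y then 1 else 0)) := by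
    by_cases hc : vp ∈ Y ∧ ZZ ∈ Y
    · rw [if_pos hc, if_pos hc.2, if_pos hc.1]
      exact le_trans (card_pair_le _ _) (by norm_num)
    · rw [if_neg hc]
      simp
  have hPZC : PZ.card ≤ 2 * ((if ZZ ∈ Y then 1 else 0) * (if Lp ∈ Y then 1 else 0))
      + 2 * ((if ZZ ∈ Y then 1 else 0) * (if vp ∈ Y then 1 else 0)) := by
    rw [hPZ]
    exact le_trans (Finset.card_union_le _ _) (Nat.add_le_add hPZ1 hPZ2)
  have hfin : IP.card + RemP.card ≤ Pbw.card + Pwb.card + Pbb.card + PZ.card := by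
    calc IP.card + RemP.card = (IP ∪ RemP).card := (Finset.card_union_of_disjoint hdisj).symm
      _ ≤ ((Pbw ∪ Pwb ∪ Pbb) ∪ PZ).card := Finset.card_le_card hsubcov
      _ ≤ (Pbw ∪ Pwb ∪ Pbb).card + PZ.card := Finset.card_union_le _ _
      _ ≤ ((Pbw ∪ Pwb).card + Pbb.card) + PZ.card :=
          Nat.add_le_add_right (Finset.card_union_le _ _) _
      _ ≤ ((Pbw.card + Pwb.card) + Pbb.card) + PZ.card :=
          Nat.add_le_add_right (Nat.add_le_add_right (Finset.card_union_le _ _) _) _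
  rw [hRemCard] at hfin
  have hE := hPbwC
  linarith [hPbwC, hPwbC, hPbbC, hPZC, hfin]

lemma vertexset_sub (hsub : ∀ j ∈ Icc 1 (n-2), Γ j ⊆ Icc 1 n)
    {x : (ℕ ⊕ ℕ) ⊕ Unit} (hx : x ∈ hatVertexSet n Γ) : x ∈ Uf n Γ := by
  rcases hx with ⟨j, hj, rfl⟩ | ⟨i, h3, rfl⟩ | rfl
  · exact blv_mem_Uf n Γ hj
  · exact whv_mem_Uf n Γ (Finset.mem_filter.mpr
      ⟨mem_Icc_of_val_pos n Γ hsub (by omega), h3⟩)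
  · exact ZZ_mem_Uf n Γ

lemma hatAdj_snd_mem (hsub : ∀ j ∈ Icc 1 (n-2), Γ j ⊆ Icc 1 n)
    {jL : ℕ} {v : ℕ ⊕ ℕ} (hjL : jL ∈ Icc 1 (n-2))
    (hvU : (Sum.inl v : (ℕ ⊕ ℕ) ⊕ Unit) ∈ Uf n Γ)
    {x y : (ℕ ⊕ ℕ) ⊕ Unit} (h : hatAdj n Γ (Sum.inl jL) v x y) : y ∈ Uf n Γ := by
  rcases h with ⟨a, b, hx, hy, hpi, -⟩ | ⟨a, (⟨hx, hy⟩ | ⟨hx, hy⟩), hav⟩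
  · rw [hy]
    rcases hpi with ⟨j, i, hab, hj, hi3, hiΓ⟩ | ⟨j, j', ha', hb', hjj, hj, hj', -⟩
    · rcases hab with ⟨h1, h2⟩ | ⟨h1, h2⟩
      · rw [h2]
        exact whv_mem_Uf n Γ (Finset.mem_filter.mpr
          ⟨mem_Icc_of_val_pos n Γ hsub (by omega), hi3⟩)
      · rw [h2]
        exact blv_mem_Uf n Γ hj
    · rw [hb']
      exact blv_mem_Uf n Γ hj'
  · rw [hy]
    exact ZZ_mem_Uf n Γ
  · rw [hy]
    rcases hav with rfl | rfl
    · exact blv_mem_Uf n Γ hjL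
    · exact hvU

lemma EQ_general (hsub : ∀ j ∈ Icc 1 (n-2), Γ j ⊆ Icc 1 n)
    {Sf Wf : Finset ℕ} (hS : Sf ⊆ Icc 1 (n-2)) (hW : Wf ⊆ V3 n Γ) :
    2 * (∑ i ∈ Wf, mfun Γ Sf i)
      + (∑ i ∈ V2 n Γ, (mfun Γ Sf i * mfun Γ Sf i - mfun Γ Sf i))
    ≤ 2 * Wf.card + 2 * (∑ i ∈ Sf.biUnion Γ, (mfun Γ Sf i - 1)) := by
  have hE : ∑ i ∈ Wf, mfun Γ Sf i ≤ (∑ i ∈ Wf, (mfun Γ Sf i - 1)) + Wf.card := by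
    rw [Finset.card_eq_sum_ones, ← Finset.sum_add_distrib]
    apply Finset.sum_le_sum
    intro i _
    omega
  have hQ : ∑ i ∈ V2 n Γ, (mfun Γ Sf i * mfun Γ Sf i - mfun Γ Sf i)
      ≤ 2 * ∑ i ∈ V2 n Γ, (mfun Γ Sf i - 1) := by
    rw [Finset.mul_sum]
    apply Finset.sum_le_sum
    intro i hi
    have hv2 : valence n Γ i = 2 := (Finset.mem_filter.mp hi).2
    have hm2 : mfun Γ Sf i ≤ 2 := by
      have := mfun_le_val n Γ hS i
      omega
    have : mfun Γ Sf i = 0 ∨ mfun Γ Sf i = 1 ∨ mfun Γ Sf i = 2 := by omega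
    rcases this with h | h | h <;> simp [h]
  have hdisjWV : Disjoint Wf (V2 n Γ) := by
    rw [Finset.disjoint_left]
    intro i hiW hiV
    have h3 : valence n Γ i = 3 := (Finset.mem_filter.mp (hW hiW)).2
    have h2 : valence n Γ i = 2 := (Finset.mem_filter.mp hiV).2
    omega
  have hsum : (∑ i ∈ Wf, (mfun Γ Sf i - 1)) + (∑ i ∈ V2 n Γ, (mfun Γ Sf i - 1))
      ≤ ∑ i ∈ Sf.biUnion Γ, (mfun Γ Sf i - 1) := by
    rw [← Finset.sum_union hdisjWV]
    have hIcc : ∑ i ∈ Icc 1 n, (mfun Γ Sf i - 1) = ∑ i ∈ Sf.biUnion Γ, (mfun Γ Sf i - 1) := by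
      symm
      apply Finset.sum_subset
      · intro x hx
        obtain ⟨j, hj, hxj⟩ := Finset.mem_biUnion.mp hx
        exact hsub j (hS hj) hxj
      · intro x _ hx
        have := (mfun_pos_iff Γ Sf x).not.mp hx
        omega
    rw [← hIcc]
    apply Finset.sum_le_sum_of_subset
    intro i hi
    rcases Finset.mem_union.mp hi with h | h
    · exact (Finset.mem_filter.mp (hW h)).1
    · exact (Finset.mem_filter.mp h).1
  omega

lemma final_arith (n s w E Q lam nu z BP IP : ℤ)
    (hn : (6:ℤ) ≤ n)
    (hlam : lam = 0 ∨ lam = 1) (hnu : nu = 0 ∨ nu = 1) (hz : z = 0 ∨ z = 1)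
    (hw : w + 6 ≤ n) (hw0 : 0 ≤ w)
    (hlam_s : lam ≤ s)
    (hBI : 3*s + 3*w + 2*z ≤ BP + IP)
    (hIB : IP + 2*(lam*nu) ≤ 2*E + Q + (2*(z*lam) + 2*(z*nu)))
    (hcase : (s = 0 ∧ E = 0 ∧ Q = 0) ∨ (s = 1 ∧ E ≤ w ∧ Q = 0)
      ∨ (2 ≤ s ∧ s + 3 ≤ n ∧ 2*E + Q + 6 ≤ 2*w + 4*s)
      ∨ (s = n - 2 ∧ E ≤ 3*w ∧ Q ≤ 12 ∧ (w = n - 6 → nu = 1))) :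
    (n-2)*w - (n-6)*s + (2*n-8)*(lam - z) ≤ (n-4)*BP := by
  have h4n : (0:ℤ) ≤ n - 4 := by linarith
  have h2n8 : (0:ℤ) ≤ 2*n - 8 := by linarith
  have hmul : (n-4) * (3*s + 3*w + 2*z - (2*E + Q + (2*(z*lam) + 2*(z*nu)) - 2*(lam*nu)))
      ≤ (n-4)*BP := mul_le_mul_of_nonneg_left (by linarith) h4n
  have hc1 : lam - 2*z + z*lam + z*nu - lam*nu ≤ 1 := by
    rcases hlam with rfl | rfl <;> rcases hnu with rfl | rfl <;>
      rcases hz with rfl | rfl <;> norm_num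
  suffices h : (n-4)*(2*E+Q) + (2*n-8)*(lam - 2*z + z*lam + z*nu - lam*nu)
      ≤ (4*n-18)*s + (2*n-10)*w by nlinarith [hmul, h]
  rcases hcase with ⟨h1, h2, h3⟩ | ⟨h1, h2, h3⟩ | ⟨h1, h2, h3⟩ | ⟨h1, h2, h3, h4⟩
  · -- s = 0
    have hl0 : lam = 0 := by
      rcases hlam with rfl | rfl
      · rfl
      · exfalso; rw [h1] at hlam_s; linarith
    subst hl0 h1 h2 h3
    have hcle : (0:ℤ) - 2*z + z*0 + z*nu - 0*nu ≤ 0 := by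
      rcases hnu with rfl | rfl <;> rcases hz with rfl | rfl <;> norm_num
    have hcmul := mul_le_mul_of_nonneg_left hcle h2n8
    have hwge : (0:ℤ) ≤ (2*n-10)*w := mul_nonneg (by linarith) hw0
    nlinarith [hcmul, hwge]
  · -- s = 1
    have hK : 2*E + Q ≤ 2*w := by linarith
    have hKmul := mul_le_mul_of_nonneg_left hK h4n
    have hcmul := mul_le_mul_of_nonneg_left hc1 h2n8
    rw [h1]
    nlinarith [hKmul, hcmul]
  · -- 2 ≤ s ≤ n-3
    have hK : 2*E + Q ≤ 2*w + 4*s - 6 := by linarith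
    have hKmul := mul_le_mul_of_nonneg_left hK h4n
    have hcmul := mul_le_mul_of_nonneg_left hc1 h2n8
    nlinarith [hKmul, hcmul]
  · -- s = n-2
    have hK : 2*E + Q ≤ 6*w + 12 := by linarith
    have hKmul := mul_le_mul_of_nonneg_left hK h4n
    by_cases hw6 : w = n - 6
    · have hnu1 : nu = 1 := h4 hw6
      subst hnu1
      have hcle : lam - 2*z + z*lam + z*1 - lam*1 ≤ 0 := by
        rcases hlam with rfl | rfl <;> rcases hz with rfl | rfl <;> norm_num
      have hcmul := mul_le_mul_of_nonneg_left hcle h2n8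
      rw [h1]
      rw [hw6]
      nlinarith [hKmul, hcmul]
    · have hw7 : w ≤ n - 7 := by omega
      have hcmul := mul_le_mul_of_nonneg_left hc1 h2n8
      have hprod : (0:ℤ) ≤ (n-7-w)*(4*n-14) :=
        mul_nonneg (by linarith) (by linarith)
      rw [h1]
      nlinarith [hKmul, hcmul, hprod]

end Gieseker

open Gieseker in
/-- The non-strict Gieseker basic inequality for the subdivided dual graph: for a
3-uniform hypergraph `Γ_1,…,Γ_{n-2}` on `{1,…,n}` (n ≥ 6) with valences 2 or 3,
satisfying (‡) and (†), with `e = {L, v}` an edge of the dual graph `Π` with black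
endpoint `L = Sum.inl jL`, and `Π̂` the subdivision of `Π` at `e` by a new vertex `Z`,
every `Y` with `∅ ≠ Y ≠ V(Π̂)` satisfies
`(n−2)·w(Y) − (n−6)·b(Y) + (2n−8)·ε(Y) ≤ (n−4)·#(Y)`. -/
theorem gieseker_semistable_inequality (n : ℕ) (hn : 6 ≤ n) (Γ : ℕ → Finset ℕ)
    (hsub : ∀ j ∈ Finset.Icc 1 (n - 2), Γ j ⊆ Finset.Icc 1 n)
    (hcard : ∀ j ∈ Finset.Icc 1 (n - 2), (Γ j).card = 3)
    (hval : ∀ i ∈ Finset.Icc 1 n, valence n Γ i = 2 ∨ valence n Γ i = 3)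
    (hddag : ∀ S ⊆ Finset.Icc 1 (n - 2), S.Nonempty →
      S.card + 2 ≤ (S.biUnion Γ).card)
    (hdag : ∀ S ⊆ Finset.Icc 1 (n - 2), 2 ≤ S.card → S.card ≤ n - 3 →
      S.card + 3 ≤ (S.biUnion Γ).card)
    (jL : ℕ) (v : ℕ ⊕ ℕ) (he : piAdj n Γ (Sum.inl jL) v)
    (Y : Set ((ℕ ⊕ ℕ) ⊕ Unit)) (hY : Y ⊆ hatVertexSet n Γ)
    (hY1 : Y ≠ ∅) (hY2 : Y ≠ hatVertexSet n Γ) :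
    ((n : ℤ) - 2) * Set.ncard {i : ℕ | valence n Γ i = 3 ∧ Sum.inl (Sum.inr i) ∈ Y} -
      ((n : ℤ) - 6) * Set.ncard {j : ℕ | j ∈ Finset.Icc 1 (n - 2) ∧
        Sum.inl (Sum.inl j) ∈ Y} +
      (2 * (n : ℤ) - 8) * eps (Sum.inl jL) Y ≤
    ((n : ℤ) - 4) * edgeBoundary n Γ (Sum.inl jL) v Y := by
  obtain ⟨hjL, hvU, hLv⟩ := he_facts n Γ hsub he
  set Sf := (Icc 1 (n-2)).filter (fun j => blv j ∈ Y) with hSfdef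
  set Wf := (V3 n Γ).filter (fun i => whv i ∈ Y) with hWfdef
  set E := ∑ i ∈ Wf, mfun Γ Sf i with hEdef
  set Q := ∑ i ∈ V2 n Γ, (mfun Γ Sf i * mfun Γ Sf i - mfun Γ Sf i) with hQdef
  set lamN : ℕ := if blv jL ∈ Y then 1 else 0 with hlamdef
  set nuN : ℕ := if (Sum.inl v : (ℕ ⊕ ℕ) ⊕ Unit) ∈ Y then 1 else 0 with hnudef
  set zN : ℕ := if ZZ ∈ Y then 1 else 0 with hzdef
  set BPc := ((Uf n Γ ×ˢ Uf n Γ).filter (bpredD n Γ (Sum.inl jL) v Y)).card with hBPdef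
  set IPc := ((Uf n Γ ×ˢ Uf n Γ).filter (ipredD n Γ (Sum.inl jL) v Y)).card with hIPdef
  -- rewrite the white vertex count
  have hwset : {i : ℕ | valence n Γ i = 3 ∧ Sum.inl (Sum.inr i) ∈ Y} = ↑Wf := by
    ext i
    constructor
    · rintro ⟨h3, hY'⟩
      exact Finset.mem_coe.mpr (Finset.mem_filter.mpr
        ⟨Finset.mem_filter.mpr ⟨mem_Icc_of_val_pos n Γ hsub (by omega), h3⟩, hY'⟩)
    · intro h
      obtain ⟨hV3, hY'⟩ := Finset.mem_filter.mp (Finset.mem_coe.mp h)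
      exact ⟨(Finset.mem_filter.mp hV3).2, hY'⟩
  have hwcard : Set.ncard {i : ℕ | valence n Γ i = 3 ∧ Sum.inl (Sum.inr i) ∈ Y}
      = Wf.card := by rw [hwset]; exact Set.ncard_coe_finset _
  have hsset : {j : ℕ | j ∈ Finset.Icc 1 (n - 2) ∧ Sum.inl (Sum.inl j) ∈ Y} = ↑Sf := by
    ext j
    constructor
    · rintro ⟨h1, h2⟩
      exact Finset.mem_coe.mpr (Finset.mem_filter.mpr ⟨h1, h2⟩)
    · intro h
      obtain ⟨h1, h2⟩ := Finset.mem_filter.mp (Finset.mem_coe.mp h)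
      exact ⟨h1, h2⟩
  have hscard : Set.ncard {j : ℕ | j ∈ Finset.Icc 1 (n - 2) ∧ Sum.inl (Sum.inl j) ∈ Y}
      = Sf.card := by rw [hsset]; exact Set.ncard_coe_finset _
  -- rewrite the edge boundary
  have hbset : {p : ((ℕ ⊕ ℕ) ⊕ Unit) × ((ℕ ⊕ ℕ) ⊕ Unit) |
      hatAdj n Γ (Sum.inl jL) v p.1 p.2 ∧ p.1 ∈ Y ∧ p.2 ∉ Y}
      = ↑((Uf n Γ ×ˢ Uf n Γ).filter (bpredD n Γ (Sum.inl jL) v Y)) := by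
    ext p
    constructor
    · rintro ⟨hadj, h1, h2⟩
      refine Finset.mem_coe.mpr (Finset.mem_filter.mpr
        ⟨Finset.mem_product.mpr ⟨?_, ?_⟩, hadj, h1, h2⟩)
      · exact vertexset_sub n Γ hsub (hY h1)
      · exact hatAdj_snd_mem n Γ hsub hjL hvU hadj
    · intro h
      exact (Finset.mem_filter.mp (Finset.mem_coe.mp h)).2
  have hedge : edgeBoundary n Γ (Sum.inl jL) v Y = BPc := by
    rw [edgeBoundary, hbset]
    exact Set.ncard_coe_finset _
  -- epsilon
  have heps : eps (Sum.inl jL) Y = (lamN : ℤ) - (zN : ℤ) := by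
    rw [hlamdef, hzdef]
    unfold eps
    by_cases h1 : (Sum.inl (Sum.inl jL) : (ℕ ⊕ ℕ) ⊕ Unit) ∈ Y <;>
      by_cases h2 : (Sum.inr () : (ℕ ⊕ ℕ) ⊕ Unit) ∈ Y <;>
      simp [h1, h2, blv, ZZ]
  -- boundary + internal = degree sum ≥ 3s + 3w + 2z
  have hBIeq := boundary_internal_deg n Γ (Sum.inl jL) v Y
  have hDS := deg_sum_ge n Γ hn hsub hcard hval hdag jL v hjL hvU hLv Y
  have hBI : 3 * Sf.card + 3 * Wf.card + 2 * zN ≤ BPc + IPc := by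
    rw [hBPdef, hIPdef, hBIeq]
    exact hDS
  -- internal bound
  have hIB : IPc + 2 * (lamN * nuN) ≤ 2 * E + Q + (2 * (zN * lamN) + 2 * (zN * nuN)) := by
    have := internal_bound n Γ hn hsub jL v he Y
    rw [hIPdef, hEdef, hQdef, hlamdef, hnudef, hzdef]
    convert this using 2 <;> ring
  -- basic bounds
  have hsub_S : Sf ⊆ Icc 1 (n-2) := Finset.filter_subset _ _
  have hsub_W : Wf ⊆ V3 n Γ := Finset.filter_subset _ _
  have hV3card : (V3 n Γ).card + 6 = n := (card_V3 n Γ hn hsub hcard hval).1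
  have hV2card : (V2 n Γ).card = 6 := (card_V3 n Γ hn hsub hcard hval).2
  have hwn : Wf.card + 6 ≤ n := by
    have := Finset.card_le_card hsub_W
    omega
  have hsn : Sf.card ≤ n - 2 := by
    have := Finset.card_le_card hsub_S
    rwa [Nat.card_Icc, Nat.add_sub_cancel] at this
  have hlam_s : lamN ≤ Sf.card := by
    rw [hlamdef]
    by_cases h1 : blv jL ∈ Y
    · rw [if_pos h1]
      have : jL ∈ Sf := Finset.mem_filter.mpr ⟨hjL, h1⟩
      exact Finset.card_pos.mpr ⟨jL, this⟩
    · rw [if_neg h1]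
      exact Nat.zero_le _
  -- the case bounds
  have hcaseN : (Sf.card = 0 ∧ E = 0 ∧ Q = 0) ∨ (Sf.card = 1 ∧ E ≤ Wf.card ∧ Q = 0)
      ∨ (2 ≤ Sf.card ∧ Sf.card + 3 ≤ n ∧ 2*E + Q + 6 ≤ 2*Wf.card + 4*Sf.card)
      ∨ (Sf.card = n - 2 ∧ E ≤ 3*Wf.card ∧ Q ≤ 12 ∧ (Wf.card = n - 6 → nuN = 1)) := by
    have hscases : Sf.card = 0 ∨ Sf.card = 1 ∨ (2 ≤ Sf.card ∧ Sf.card ≤ n - 3)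
        ∨ Sf.card = n - 2 := by omega
    rcases hscases with h | h | ⟨h1, h2⟩ | h
    · left
      have hSfe : Sf = ∅ := Finset.card_eq_zero.mp h
      have hm0 : ∀ i, mfun Γ Sf i = 0 := by
        intro i
        rw [hSfe, mfun]
        simp
      refine ⟨h, ?_, ?_⟩
      · exact Finset.sum_eq_zero fun i _ => hm0 i
      · exact Finset.sum_eq_zero fun i _ => by simp [hm0 i]
    · right; left
      refine ⟨h, ?_, ?_⟩
      · calc E ≤ ∑ _i ∈ Wf, 1 := Finset.sum_le_sum fun i _ => by
              have := mfun_le_s Γ Sf i; omega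
          _ = Wf.card := by rw [Finset.sum_const, smul_eq_mul, Nat.mul_one]
      · apply Finset.sum_eq_zero
        intro i _
        have hm := mfun_le_s Γ Sf i
        rw [h] at hm
        have : mfun Γ Sf i = 0 ∨ mfun Γ Sf i = 1 := by omega
        rcases this with h' | h' <;> simp [h']
    · right; right; left
      have hEQ := EQ_general n Γ hsub hsub_S hsub_W
      have hT := sum_mfun_sub_one n Γ hsub hcard hsub_S
      have hU := hdag Sf hsub_S h1 h2
      rw [← hEdef, ← hQdef] at hEQ
      refine ⟨h1, by omega, by omega⟩
    · right; right; right
      refine ⟨h, ?_, ?_, ?_⟩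
      · calc E ≤ ∑ _i ∈ Wf, 3 := Finset.sum_le_sum fun i hi => by
              have h1 := mfun_le_val n Γ hsub_S i
              have h3 : valence n Γ i = 3 := (Finset.mem_filter.mp (hsub_W hi)).2
              omega
          _ = 3 * Wf.card := by rw [Finset.sum_const, smul_eq_mul, Nat.mul_comm]
      · calc Q ≤ ∑ _i ∈ V2 n Γ, 2 := Finset.sum_le_sum fun i hi => by
              have h1 := mfun_le_val n Γ hsub_S i
              have h2 : valence n Γ i = 2 := (Finset.mem_filter.mp hi).2
              have : mfun Γ Sf i = 0 ∨ mfun Γ Sf i = 1 ∨ mfun Γ Sf i = 2 := by omega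
              rcases this with h' | h' | h' <;> simp [h']
          _ = 12 := by rw [Finset.sum_const, smul_eq_mul, hV2card]
      · intro hw6
        have hSfull : Sf = Icc 1 (n-2) := by
          apply Finset.eq_of_subset_of_card_le hsub_S
          rw [Nat.card_Icc, Nat.add_sub_cancel, h]
        have hWfull : Wf = V3 n Γ := by
          apply Finset.eq_of_subset_of_card_le hsub_W
          omega
        rw [hnudef]
        rcases he with ⟨j, i, hab, hj, hi3, hiΓ⟩ | ⟨j, j', hx, hy, hjj, hj, hj', -⟩
        · rcases hab with ⟨h1, h2⟩ | ⟨h1, h2⟩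
          · have hiV3 : i ∈ V3 n Γ := Finset.mem_filter.mpr
              ⟨mem_Icc_of_val_pos n Γ hsub (by omega), hi3⟩
            rw [← hWfull] at hiV3
            have : whv i ∈ Y := (Finset.mem_filter.mp hiV3).2
            rw [h2]
            simp only [blv, whv] at this ⊢
            rw [if_pos this]
          · exact absurd h1 (by simp)
        · have hj'S : j' ∈ Sf := by rw [hSfull]; exact hj'
          have : blv j' ∈ Y := (Finset.mem_filter.mp hj'S).2
          rw [hy]
          simp only [blv, whv] at this ⊢
          rw [if_pos this]
  -- assemble over ℤ
  rw [hwcard, hscard, heps, hedge]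
  have hlamZ : (lamN : ℤ) = 0 ∨ (lamN : ℤ) = 1 := by
    rw [hlamdef]; by_cases h : blv jL ∈ Y <;> simp [h]
  have hnuZ : (nuN : ℤ) = 0 ∨ (nuN : ℤ) = 1 := by
    rw [hnudef]; by_cases h : (Sum.inl v : (ℕ ⊕ ℕ) ⊕ Unit) ∈ Y <;> simp [h]
  have hzZ : (zN : ℤ) = 0 ∨ (zN : ℤ) = 1 := by
    rw [hzdef]; by_cases h : ZZ ∈ Y <;> simp [h]
  have hcaseZ : ((Sf.card : ℤ) = 0 ∧ (E : ℤ) = 0 ∧ (Q : ℤ) = 0)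
      ∨ ((Sf.card : ℤ) = 1 ∧ (E : ℤ) ≤ (Wf.card : ℤ) ∧ (Q : ℤ) = 0)
      ∨ (2 ≤ (Sf.card : ℤ) ∧ (Sf.card : ℤ) + 3 ≤ (n : ℤ)
          ∧ 2*(E : ℤ) + (Q : ℤ) + 6 ≤ 2*(Wf.card : ℤ) + 4*(Sf.card : ℤ))
      ∨ ((Sf.card : ℤ) = (n : ℤ) - 2 ∧ (E : ℤ) ≤ 3*(Wf.card : ℤ) ∧ (Q : ℤ) ≤ 12
          ∧ ((Wf.card : ℤ) = (n : ℤ) - 6 → (nuN : ℤ) = 1)) := by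
    rcases hcaseN with ⟨h1, h2, h3⟩ | ⟨h1, h2, h3⟩ | ⟨h1, h2, h3⟩ | ⟨h1, h2, h3, h4⟩
    · exact Or.inl ⟨by omega, by omega, by omega⟩
    · exact Or.inr (Or.inl ⟨by omega, by omega, by omega⟩)
    · exact Or.inr (Or.inr (Or.inl ⟨by omega, by omega, by omega⟩))
    · refine Or.inr (Or.inr (Or.inr ⟨by omega, by omega, by omega, ?_⟩))
      intro hw6
      have : Wf.card = n - 6 := by omega
      have := h4 this
      omega
  have := final_arith (n : ℤ) (Sf.card : ℤ) (Wf.card : ℤ) (E : ℤ) (Q : ℤ)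
    (lamN : ℤ) (nuN : ℤ) (zN : ℤ) (BPc : ℤ) (IPc : ℤ)
    (by exact_mod_cast hn) hlamZ hnuZ hzZ (by exact_mod_cast hwn) (Int.natCast_nonneg _)
    (by exact_mod_cast hlam_s) (by exact_mod_cast hBI) (by exact_mod_cast hIB) hcaseZ
  linarith [this]
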